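/- Let x, y, X, Y be finite configurations over ℤ^d, let 𝒜 = {s ∈ ℤ^d : X(s) ≠ Y(s)}, and assume 𝒜 is nonempty. Let 𝒩 ⊆ ℤ^d be finite and suppose x(b) ≠ y(b) for some b ∉ 𝒜 + 𝒩. Set φ± = (e_x ± e_y)/√2 and ψ± = (e_X ± e_Y)/√2. Then the pure states |φ+⟩⟨φ+| and |φ−⟩⟨φ−| have equal reductions to 𝒜 + 𝒩, while the pure states |ψ+⟩⟨ψ+| and |ψ−⟩⟨ψ−| have different reductions to 𝒜. -/

import Mathlib

open scoped Pointwise ComplexConjugate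
open Classical

noncomputable section

variable (d : ℕ) (A : Type) (q : A)

/-- Finite configurations over `ℤ^d`. -/
def Cf : Type := {c : (Fin d → ℤ) → A // {i | c i ≠ q}.Finite}

/-- Restrictions to `S` of finite configurations. -/
def Rst (S : Set (Fin d → ℤ)) : Type := {u : S → A // {i | u i ≠ q}.Finite}

variable {d A q}

def restr (S : Set (Fin d → ℤ)) (c : Cf d A q) : Rst d A q S :=
  ⟨fun i => c.1 i, c.2.preimage Subtype.val_injective.injOn⟩

def glue {S : Set (Fin d → ℤ)} (u : Rst d A q S) (v : Rst d A q Sᶜ) : Cf d A q :=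
  ⟨fun i => if h : i ∈ S then u.1 ⟨i, h⟩ else v.1 ⟨i, h⟩, by
    apply Set.Finite.subset ((u.2.image Subtype.val).union (v.2.image Subtype.val))
    intro i hi
    by_cases h : i ∈ S
    · exact Or.inl ⟨⟨i, h⟩, by simpa [h] using hi, rfl⟩
    · exact Or.inr ⟨⟨i, h⟩, by simpa [h] using hi, rfl⟩⟩

/-- The Hilbert space `ℓ²(C_f, ℂ)`. -/
abbrev Hd (d : ℕ) (A : Type) (q : A) : Type := lp (fun _ : Cf d A q => ℂ) 2

/-- Canonical basis vector. -/
def e (c : Cf d A q) : Hd d A q := lp.single 2 c 1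

/-- A state: countable convex combination of an orthonormal family of pure states. -/
structure State (H : Type) [NormedAddCommGroup H] [InnerProductSpace ℂ H] where
  ψ : ℕ → H
  p : ℕ → ℝ
  nonneg : ∀ k, 0 ≤ p k
  sum_one : HasSum p 1
  ortho : ∀ j k, p j ≠ 0 → p k ≠ 0 → (inner ℂ (ψ j) (ψ k) : ℂ) = if j = k then 1 else 0

/-- Reduction to `S` of the mixture of the family `ψ` with weights `p`. -/
def redFam (p : ℕ → ℝ) (ψ : ℕ → Hd d A q) (S : Set (Fin d → ℤ)) :
    Rst d A q S → Rst d A q S → ℂ := fun u u' =>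
  ∑' k, (p k : ℂ) * ∑' v : Rst d A q Sᶜ, (ψ k) (glue u v) * conj ((ψ k) (glue u' v))

def reduct (ρ : State (Hd d A q)) (S : Set (Fin d → ℤ)) :
    Rst d A q S → Rst d A q S → ℂ := redFam ρ.p ρ.ψ S

def redApply (G : Hd d A q →L[ℂ] Hd d A q) (ρ : State (Hd d A q)) (S : Set (Fin d → ℤ)) :
    Rst d A q S → Rst d A q S → ℂ := redFam ρ.p (fun k => G (ρ.ψ k)) S

/-- `G` is local at `𝒜` with neighbourhood `𝒩`. -/
def LocalAt (G : Hd d A q →L[ℂ] Hd d A q) (𝒜 𝒩 : Set (Fin d → ℤ)) : Prop :=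
  ∀ ρ ρ' : State (Hd d A q), reduct ρ (𝒜 + 𝒩) = reduct ρ' (𝒜 + 𝒩) →
    redApply G ρ 𝒜 = redApply G ρ' 𝒜

/-- `F` is a cellular automaton. -/
def IsCA (F : Cf d A q → Cf d A q) : Prop :=
  ∃ (N : Set (Fin d → ℤ)) (_ : N.Finite) (f : (N → A) → A),
    f (fun _ => q) = q ∧ ∀ c i, (F c).1 i = f (fun n => c.1 (i + n.1))

/-- `F` is reversible. -/
def Reversible (F : Cf d A q → Cf d A q) : Prop :=
  ∃ NI : Set (Fin d → ℤ), NI.Finite ∧ ∀ x y : Cf d A q, ∀ i : Fin d → ℤ,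
    (∀ n ∈ NI, (F x).1 (i + n) = (F y).1 (i + n)) → x.1 i = y.1 i


/-- Reduction to `S` of the pure state `|ψ⟩⟨ψ|`. -/
def pureRed (ψ : Hd d A q) (S : Set (Fin d → ℤ)) :
    Rst d A q S → Rst d A q S → ℂ := fun u u' =>
  ∑' v : Rst d A q Sᶜ, (ψ) (glue u v) * conj ((ψ) (glue u' v))

lemma e_apply (c c' : Cf d A q) : (e c : ∀ _ : Cf d A q, ℂ) c' = if c' = c then 1 else 0 := by
  simp [e, lp.single_apply, Pi.single_apply]

lemma restr_glue_left {S : Set (Fin d → ℤ)} (u : Rst d A q S) (v : Rst d A q Sᶜ) :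
    restr S (glue u v) = u := by
  apply Subtype.ext; funext i
  simp [restr, glue, i.2]

lemma restr_glue_right {S : Set (Fin d → ℤ)} (u : Rst d A q S) (v : Rst d A q Sᶜ) :
    restr Sᶜ (glue u v) = v := by
  apply Subtype.ext; funext i
  have : (i : Fin d → ℤ) ∉ S := i.2
  simp [restr, glue, this]

lemma glue_restr (S : Set (Fin d → ℤ)) (c : Cf d A q) :
    glue (restr S c) (restr Sᶜ c) = c := by
  apply Subtype.ext; funext i
  by_cases h : i ∈ S <;> simp [glue, restr, h]

lemma glue_eq_iff {S : Set (Fin d → ℤ)} {u : Rst d A q S} {v : Rst d A q Sᶜ} {c : Cf d A q} :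
    glue u v = c ↔ u = restr S c ∧ v = restr Sᶜ c := by
  constructor
  · rintro rfl; exact ⟨(restr_glue_left u v).symm, (restr_glue_right u v).symm⟩
  · rintro ⟨rfl, rfl⟩; exact glue_restr S c

lemma apply_smul_add (α : ℂ) (x y c : Cf d A q) :
    ((α • (e x + e y) : Hd d A q) : ∀ _ : Cf d A q, ℂ) c =
      α * ((if c = x then 1 else 0) + (if c = y then 1 else 0)) := by
  rw [lp.coeFn_smul, Pi.smul_apply, lp.coeFn_add, Pi.add_apply, e_apply, e_apply]
  simp [smul_eq_mul]

lemma apply_smul_sub (α : ℂ) (x y c : Cf d A q) :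
    ((α • (e x - e y) : Hd d A q) : ∀ _ : Cf d A q, ℂ) c =
      α * ((if c = x then 1 else 0) - (if c = y then 1 else 0)) := by
  rw [lp.coeFn_smul, Pi.smul_apply, lp.coeFn_sub, Pi.sub_apply, e_apply, e_apply]
  simp [smul_eq_mul]

lemma conj_ite (P : Prop) [Decidable P] :
    conj (if P then (1:ℂ) else 0) = if P then 1 else 0 := by
  split_ifs <;> simp

/-- with `𝒜 = {s | X s ≠ Y s}` nonempty, `𝒩` finite, and `x, y` differing
somewhere outside `𝒜 + 𝒩`, the pure states `|φ±⟩⟨φ±|` (for `φ± = (e_x ± e_y)/√2`) have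
equal reductions to `𝒜 + 𝒩`, while `|ψ±⟩⟨ψ±|` (for `ψ± = (e_X ± e_Y)/√2`) have different
reductions to `𝒜`. -/
theorem pure_states_reductions
    {d : ℕ} (hd : 0 < d) {A : Type} [Fintype A] {q : A}
    (x y X Y : Cf d A q) (𝒜 : Set (Fin d → ℤ)) (h𝒜 : 𝒜 = {s | X.1 s ≠ Y.1 s})
    (h𝒜ne : 𝒜.Nonempty) (𝒩 : Set (Fin d → ℤ)) (h𝒩 : 𝒩.Finite)
    (hxy : ∃ b ∉ 𝒜 + 𝒩, x.1 b ≠ y.1 b) :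
    pureRed (((Real.sqrt 2 : ℂ))⁻¹ • (e x + e y)) (𝒜 + 𝒩) =
        pureRed (((Real.sqrt 2 : ℂ))⁻¹ • (e x - e y)) (𝒜 + 𝒩) ∧
      pureRed (((Real.sqrt 2 : ℂ))⁻¹ • (e X + e Y)) 𝒜 ≠
        pureRed (((Real.sqrt 2 : ℂ))⁻¹ • (e X - e Y)) 𝒜 := by
  set α : ℂ := ((Real.sqrt 2 : ℂ))⁻¹ with hαdef
  have hαc : conj α = α := by
    rw [hαdef, map_inv₀, Complex.conj_ofReal]
  have hα2 : α * α = 1/2 := by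
    rw [hαdef, ← mul_inv, ← Complex.ofReal_mul, Real.mul_self_sqrt (by norm_num)]
    norm_num
  obtain ⟨b, hb, hbxy⟩ := hxy
  constructor
  · funext u u'
    unfold pureRed
    apply tsum_congr
    intro v
    have hv : ∀ w w' : Rst d A q (𝒜 + 𝒩), glue w v = x → glue w' v = y → False := by
      intro w w' h1 h2
      apply hbxy
      have e1 : v = restr (𝒜 + 𝒩)ᶜ x := (glue_eq_iff.mp h1).2
      have e2 : v = restr (𝒜 + 𝒩)ᶜ y := (glue_eq_iff.mp h2).2
      have := e1.symm.trans e2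
      exact congrFun (congrArg Subtype.val this) ⟨b, hb⟩
    rw [apply_smul_add, apply_smul_add, apply_smul_sub, apply_smul_sub]
    simp only [map_mul, map_add, map_sub, hαc, conj_ite]
    have h1 : (if glue u v = x then (1:ℂ) else 0) * (if glue u' v = y then (1:ℂ) else 0) = 0 := by
      split_ifs with p1 p2
      · exact absurd (hv u u' p1 p2) (fun h => h)
      all_goals ring
    have h2 : (if glue u v = y then (1:ℂ) else 0) * (if glue u' v = x then (1:ℂ) else 0) = 0 := by
      split_ifs with p1 p2
      · exact absurd (hv u' u p2 p1) (fun h => h)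
      all_goals ring
    linear_combination (2*α^2) * h1 + (2*α^2) * h2
  · intro hEq
    obtain ⟨a, ha⟩ := h𝒜ne
    have hXa : X.1 a ≠ Y.1 a := by rw [h𝒜] at ha; exact ha
    have hXY : X ≠ Y := fun h => hXa (by rw [h])
    have hu : restr 𝒜 X ≠ restr 𝒜 Y := fun h =>
      hXa (congrFun (congrArg Subtype.val h) ⟨a, ha⟩)
    have hvXY : restr 𝒜ᶜ X = restr 𝒜ᶜ Y := by
      apply Subtype.ext; funext i
      obtain ⟨j, hj⟩ := i
      have : X.1 j = Y.1 j := by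
        by_contra h
        exact hj (by rw [h𝒜]; exact h)
      simpa [restr] using this
    have key := congrFun (congrFun hEq (restr 𝒜 X)) (restr 𝒜 Y)
    unfold pureRed at key
    rw [tsum_eq_single (restr 𝒜ᶜ X)
        (by
          intro v hv
          rw [apply_smul_add, apply_smul_add]
          have e1 : glue (restr 𝒜 X) v ≠ X := fun h => hv (glue_eq_iff.mp h).2
          have e2 : glue (restr 𝒜 X) v ≠ Y := fun h => hu (glue_eq_iff.mp h).1
          have e3 : glue (restr 𝒜 Y) v ≠ X := fun h => hu (glue_eq_iff.mp h).1.symm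
          have e4 : glue (restr 𝒜 Y) v ≠ Y := fun h => hv (by rw [(glue_eq_iff.mp h).2, hvXY])
          simp [e1, e2, e3, e4]),
      tsum_eq_single (restr 𝒜ᶜ X)
        (by
          intro v hv
          rw [apply_smul_sub, apply_smul_sub]
          have e1 : glue (restr 𝒜 X) v ≠ X := fun h => hv (glue_eq_iff.mp h).2
          have e2 : glue (restr 𝒜 X) v ≠ Y := fun h => hu (glue_eq_iff.mp h).1
          have e3 : glue (restr 𝒜 Y) v ≠ X := fun h => hu (glue_eq_iff.mp h).1.symm
          have e4 : glue (restr 𝒜 Y) v ≠ Y := fun h => hv (by rw [(glue_eq_iff.mp h).2, hvXY])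
          simp [e1, e2, e3, e4])] at key
    rw [apply_smul_add, apply_smul_add, apply_smul_sub, apply_smul_sub] at key
    have g1 : glue (restr 𝒜 X) (restr 𝒜ᶜ X) = X := glue_restr 𝒜 X
    have g2 : glue (restr 𝒜 X) (restr 𝒜ᶜ X) ≠ Y := fun h => hu (glue_eq_iff.mp h).1
    have g3 : glue (restr 𝒜 Y) (restr 𝒜ᶜ X) ≠ X := fun h => hu (glue_eq_iff.mp h).1.symm
    have g4 : glue (restr 𝒜 Y) (restr 𝒜ᶜ X) = Y := by rw [hvXY]; exact glue_restr 𝒜 Y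
    rw [if_pos g1, if_neg g2, if_neg g3, if_pos g4] at key
    simp only [map_mul, map_add, map_sub, hαc, map_one, map_zero] at key
    rw [show α * ((1:ℂ) + 0) * (α * (0 + 1)) = α * α by ring,
      show α * ((1:ℂ) - 0) * (α * (0 - 1)) = -(α * α) by ring, hα2] at key
    norm_num at key


end
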